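/- Let H be a complex Hilbert space and let (gₙ) be a sequence of continuously differentiable compactly supported functions gₙ : ℝ → H such that both (gₙ) and (gₙ′) are Cauchy sequences in the L² norm over (0,∞) (i.e. for every ε > 0 there is N with ∫_{(0,∞)} ‖gₙ(t) − gₘ(t)‖² dt < ε and ∫_{(0,∞)} ‖gₙ′(t) − gₘ′(t)‖² dt < ε for all n, m ≥ N). Then there exists a continuous function ĝ : [0,∞) → H such that gₙ → ĝ uniformly on [0,∞) and ĝ(t) → 0 as t → ∞. -/

import Mathlib

open MeasureTheory Filter

-- auxiliary: compactly supported function on ℝ vanishes for large t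
lemma exists_zero_of_compactSupport {H : Type*} [NormedAddCommGroup H]
    {f : ℝ → H} (hs : HasCompactSupport f) : ∃ R : ℝ, ∀ s, R ≤ s → f s = 0 := by
  obtain ⟨R, hR⟩ := hs.isCompact.isBounded.subset_closedBall 0
  refine ⟨|R| + 1, fun s hsR => ?_⟩
  apply image_eq_zero_of_notMem_tsupport
  intro hmem
  have := hR hmem
  simp only [Metric.mem_closedBall, Real.dist_eq, sub_zero] at this
  have h1 : (0:ℝ) < |R| + 1 := by positivity
  have : s ≤ R := le_trans (le_abs_self s) this
  nlinarith [le_abs_self R]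

-- key pointwise bound
lemma key_bound {H : Type*} [NormedAddCommGroup H] [InnerProductSpace ℝ H]
    (f : ℝ → H) (hf : ContDiff ℝ 1 f) (hs : HasCompactSupport f) {t : ℝ} (ht : 0 ≤ t) :
    ‖f t‖ ^ 2 ≤ (∫ s in Set.Ioi (0 : ℝ), ‖f s‖ ^ 2) +
      ∫ s in Set.Ioi (0 : ℝ), ‖deriv f s‖ ^ 2 := by
  obtain ⟨R, hR⟩ := exists_zero_of_compactSupport hs
  set T : ℝ := max t R with hT
  have htT : t ≤ T := le_max_left _ _
  have hfT : f T = 0 := hR T (le_max_right _ _)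
  have hdiff : Differentiable ℝ f := hf.differentiable one_ne_zero
  have hcontd : Continuous (deriv f) := hf.continuous_deriv le_rfl
  have hcont : Continuous f := hf.continuous
  have hder : ∀ s : ℝ, HasDerivAt (fun u => @inner ℝ _ _ (f u) (f u))
      (@inner ℝ _ _ (f s) (deriv f s) + @inner ℝ _ _ (deriv f s) (f s)) s := fun s =>
    ((hdiff s).hasDerivAt).inner ℝ ((hdiff s).hasDerivAt)
  have hcontφ : Continuous (fun s => @inner ℝ _ _ (f s) (deriv f s) + @inner ℝ _ _ (deriv f s) (f s)) :=
    (hcont.inner hcontd).add (hcontd.inner hcont)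
  have hFTC := intervalIntegral.integral_eq_sub_of_hasDerivAt
    (fun s _ => hder s) (hcontφ.intervalIntegrable t T)
  have hφt : @inner ℝ _ _ (f t) (f t) = ‖f t‖ ^ 2 := real_inner_self_eq_norm_sq _
  have hφT : @inner ℝ _ _ (f T) (f T) = 0 := by rw [hfT]; simp
  -- ‖f t‖^2 = -∫_t^T φ'
  have h1 : ‖f t‖ ^ 2 = -∫ s in t..T,
      (@inner ℝ _ _ (f s) (deriv f s) + @inner ℝ _ _ (deriv f s) (f s)) := by
    rw [hFTC, hφT, hφt]; ring
  have hmono : (-∫ s in t..T, (@inner ℝ _ _ (f s) (deriv f s) + @inner ℝ _ _ (deriv f s) (f s)))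
      ≤ ∫ s in t..T, (‖f s‖ ^ 2 + ‖deriv f s‖ ^ 2) := by
    rw [← intervalIntegral.integral_neg]
    apply intervalIntegral.integral_mono_on htT
      ((hcontφ.neg).intervalIntegrable t T)
      (((hcont.norm.pow 2).add (hcontd.norm.pow 2)).intervalIntegrable t T)
    intro s _
    simp only [Pi.add_apply, Pi.pow_apply, Pi.neg_apply]
    have h2 : |@inner ℝ _ _ (f s) (deriv f s)| ≤ ‖f s‖ * ‖deriv f s‖ :=
      abs_real_inner_le_norm _ _
    have h3 : |@inner ℝ _ _ (deriv f s) (f s)| ≤ ‖deriv f s‖ * ‖f s‖ :=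
      abs_real_inner_le_norm _ _
    have := abs_le.mp h2
    have := abs_le.mp h3
    nlinarith [sq_nonneg (‖f s‖ - ‖deriv f s‖)]
  have c1 : HasCompactSupport (fun s => ‖f s‖ ^ 2) :=
    hs.comp_left (g := fun x : H => ‖x‖ ^ 2) (by simp)
  have c2 : HasCompactSupport (fun s => ‖deriv f s‖ ^ 2) :=
    hs.deriv.comp_left (g := fun x : H => ‖x‖ ^ 2) (by simp)
  have i1 : Integrable (fun s : ℝ => ‖f s‖ ^ 2) :=
    (hcont.norm.pow 2).integrable_of_hasCompactSupport c1
  have i2 : Integrable (fun s : ℝ => ‖deriv f s‖ ^ 2) :=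
    (hcontd.norm.pow 2).integrable_of_hasCompactSupport c2
  have hint1 : IntegrableOn (fun s => ‖f s‖ ^ 2 + ‖deriv f s‖ ^ 2) (Set.Ioi (0:ℝ)) :=
    (i1.add i2).integrableOn
  have hsub : Set.Ioc t T ⊆ Set.Ioi (0:ℝ) := fun s hsm => lt_of_le_of_lt ht hsm.1
  have hmono2 : (∫ s in t..T, (‖f s‖ ^ 2 + ‖deriv f s‖ ^ 2))
      ≤ ∫ s in Set.Ioi (0:ℝ), (‖f s‖ ^ 2 + ‖deriv f s‖ ^ 2) := by
    rw [intervalIntegral.integral_of_le htT]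
    apply setIntegral_mono_set hint1
    · filter_upwards with s
      positivity
    · exact HasSubset.Subset.eventuallyLE hsub
  have hsplit : (∫ s in Set.Ioi (0:ℝ), (‖f s‖ ^ 2 + ‖deriv f s‖ ^ 2))
      = (∫ s in Set.Ioi (0:ℝ), ‖f s‖ ^ 2) + ∫ s in Set.Ioi (0:ℝ), ‖deriv f s‖ ^ 2 :=
    integral_add i1.integrableOn i2.integrableOn
  linarith

/-- If `(gₙ)` is a sequence of `C¹` compactly supported `H`-valued
functions such that `(gₙ)` and `(gₙ')` are Cauchy in `L²(0, ∞)`, then the `gₙ` converge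
uniformly on `[0, ∞)` to a continuous function `ĝ` vanishing at infinity. -/
theorem stmt11 {H : Type*} [NormedAddCommGroup H] [InnerProductSpace ℂ H]
    [CompleteSpace H]
    (g : ℕ → ℝ → H) (hg : ∀ n, ContDiff ℝ 1 (g n))
    (hsupp : ∀ n, HasCompactSupport (g n))
    (hCauchy : ∀ ε > (0 : ℝ), ∃ N : ℕ, ∀ n ≥ N, ∀ m ≥ N,
      (∫ t in Set.Ioi (0 : ℝ), ‖g n t - g m t‖ ^ 2) < ε)
    (hCauchy' : ∀ ε > (0 : ℝ), ∃ N : ℕ, ∀ n ≥ N, ∀ m ≥ N,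
      (∫ t in Set.Ioi (0 : ℝ), ‖deriv (g n) t - deriv (g m) t‖ ^ 2) < ε) :
    ∃ ghat : ℝ → H,
      ContinuousOn ghat (Set.Ici (0 : ℝ)) ∧
      TendstoUniformlyOn (fun n t => g n t) ghat atTop (Set.Ici (0 : ℝ)) ∧
      Tendsto ghat atTop (nhds 0) := by
  -- pointwise bound for differences
  have key : ∀ n m : ℕ, ∀ t : ℝ, 0 ≤ t →
      ‖g n t - g m t‖ ^ 2 ≤ (∫ s in Set.Ioi (0 : ℝ), ‖g n s - g m s‖ ^ 2) +
        ∫ s in Set.Ioi (0 : ℝ), ‖deriv (g n) s - deriv (g m) s‖ ^ 2 := by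
    intro n m t ht
    letI : InnerProductSpace ℝ H := InnerProductSpace.complexToReal
    have hcs : HasCompactSupport (fun s => g n s - g m s) := by
      simp only [sub_eq_add_neg]
      exact (hsupp n).add ((hsupp m).neg)
    have hd : deriv (fun s => g n s - g m s) = fun s => deriv (g n) s - deriv (g m) s := by
      funext s
      exact deriv_fun_sub (((hg n).differentiable one_ne_zero) s) (((hg m).differentiable one_ne_zero) s)
    have := key_bound (H := H) (fun s => g n s - g m s)
      ((hg n).sub (hg m)) hcs ht
    rwa [hd] at this
  -- uniform Cauchy on [0, ∞)
  have hUC : UniformCauchySeqOn (fun n t => g n t) atTop (Set.Ici (0 : ℝ)) := by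
    rw [Metric.uniformCauchySeqOn_iff]
    intro ε hε
    obtain ⟨N₁, hN₁⟩ := hCauchy (ε ^ 2 / 2) (by positivity)
    obtain ⟨N₂, hN₂⟩ := hCauchy' (ε ^ 2 / 2) (by positivity)
    refine ⟨max N₁ N₂, fun n hn m hm t ht => ?_⟩
    have h1 := hN₁ n (le_trans (le_max_left _ _) hn) m (le_trans (le_max_left _ _) hm)
    have h2 := hN₂ n (le_trans (le_max_right _ _) hn) m (le_trans (le_max_right _ _) hm)
    have h3 := key n m t ht
    have h4 : ‖g n t - g m t‖ ^ 2 < ε ^ 2 := by linarith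
    rw [dist_eq_norm]
    exact lt_of_pow_lt_pow_left₀ 2 hε.le h4
  -- pointwise limit
  set ghat : ℝ → H := fun t => limUnder atTop (fun n => g n t) with hghat
  have hptw : ∀ t ∈ Set.Ici (0 : ℝ), Tendsto (fun n => g n t) atTop (nhds (ghat t)) := by
    intro t ht
    exact (hUC.cauchySeq ht).tendsto_limUnder
  have hU : TendstoUniformlyOn (fun n t => g n t) ghat atTop (Set.Ici (0 : ℝ)) :=
    hUC.tendstoUniformlyOn_of_tendsto hptw
  refine ⟨ghat, ?_, hU, ?_⟩
  · exact hU.continuousOn (Eventually.of_forall (f := atTop) fun n => (hg n).continuous.continuousOn).frequently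
  · rw [NormedAddCommGroup.tendsto_nhds_zero]
    intro ε hε
    have := (Metric.tendstoUniformlyOn_iff.mp hU) (ε / 2) (by positivity)
    obtain ⟨n, hn⟩ := this.exists
    obtain ⟨R, hR⟩ := exists_zero_of_compactSupport (hsupp n)
    filter_upwards [eventually_ge_atTop (max R 0)] with t ht
    have ht0 : (0:ℝ) ≤ t := le_trans (le_max_right _ _) ht
    have := hn t ht0
    rw [hR t (le_trans (le_max_left _ _) ht), dist_zero_right] at this
    linarith
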